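/- Let K be an algebraically closed field of characteristic p > 3 and let b, t ∈ K with t ≠ 0. Then the quartic polynomial −b·t²XY − t⁴X²Y² + 3t²XY − tX − tY is irreducible in K[X,Y]. -/

import Mathlib

open Polynomial in
theorem aux_irred_stmt12 (K : Type) [Field K] (b t : K) (ht : t ≠ 0) (h4 : (4:K) ≠ 0) :
    Irreducible ((C (-(C (t^4) * X^2)) * X^2 + C (C ((3-b)*t^2) * X - C t) * X
      + C (-(C t * X)) : Polynomial (Polynomial K))) := by
  set a₂ : Polynomial K := -(C (t^4) * X^2) with ha2
  set a₁ : Polynomial K := C ((3-b)*t^2) * X - C t with ha1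
  set a₀ : Polynomial K := -(C t * X) with ha0
  set D : Polynomial K := a₁^2 - 4*a₂*a₀ with hD
  have hDdeg : D.natDegree = 3 := by
    have : D = C (-(4*t^5)) * X^3 + C (((3-b)*t^2)^2) * X^2
        + C (-(2*((3-b)*t^2)*t)) * X + C (t^2) := by
      simp only [hD, ha1, ha2, ha0, map_neg, map_mul, map_pow, map_sub, map_ofNat]
      ring
    rw [this]
    compute_degree!
  set P : Polynomial (Polynomial K) := C a₂ * X^2 + C a₁ * X + C a₀ with hP
  have hprim : P.IsPrimitive := by
    intro r hr
    rw [C_dvd_iff_dvd_coeff] at hr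
    have h0 : r ∣ a₀ := by simpa [hP, coeff_add, coeff_C_mul, coeff_X, coeff_C] using hr 0
    have h1 : r ∣ a₁ := by simpa [hP, coeff_add, coeff_C_mul, coeff_X, coeff_C] using hr 1
    have hct : r ∣ C t := by
      have : C t = C ((3-b)*t) * (C t * X) - a₁ := by
        simp only [ha1, map_mul, map_sub, map_pow]; ring
      rw [this]
      exact dvd_sub (Dvd.dvd.mul_left (by simpa [ha0] using h0.neg_right) _) h1
    exact isUnit_of_dvd_unit hct (isUnit_C.mpr (isUnit_iff_ne_zero.mpr ht))
  letI : DecidableEq K := Classical.decEq K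
  rw [hprim.irreducible_iff_irreducible_map_fraction_map (K := RatFunc K)]
  set i := algebraMap (Polynomial K) (RatFunc K) with hi
  have hinj : Function.Injective i := IsFractionRing.injective _ _
  have ha2ne : a₂ ≠ 0 := by
    simp only [ha2, neg_ne_zero]
    exact mul_ne_zero (by simpa using pow_ne_zero 4 ht) (pow_ne_zero 2 X_ne_zero)
  have hmap : P.map i = C (i a₂) * X^2 + C (i a₁) * X + C (i a₀) := by
    simp [hP, Polynomial.map_add, Polynomial.map_mul, Polynomial.map_pow]
  have hdeg : (P.map i).natDegree = 2 := by
    rw [hmap]; compute_degree!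
    exact fun h => ha2ne (hinj (by simpa using h))
  rw [irreducible_iff_roots_eq_zero_of_degree_le_three (by omega) (by omega)]
  rw [Multiset.eq_zero_iff_forall_notMem]
  intro q hq
  have hPne : P.map i ≠ 0 := fun h => by simp [h] at hdeg
  rw [mem_roots hPne, IsRoot, hmap] at hq
  simp only [eval_add, eval_mul, eval_pow, eval_C, eval_X] at hq
  set s : RatFunc K := 2 * i a₂ * q + i a₁ with hs
  have hs2 : s^2 = i D := by
    rw [hD, map_sub, map_mul, map_mul, map_pow, map_ofNat]
    linear_combination (4 * i a₂) * hq
  have hint : IsIntegral (Polynomial K) s :=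
    ⟨X^2 - C D, monic_X_pow_sub_C D two_ne_zero, by
      simp [eval₂_sub, eval₂_pow, ← hi, hs2]⟩
  obtain ⟨r, hr⟩ := IsIntegrallyClosed.isIntegral_iff.mp hint
  have hrD : r^2 = D := hinj (by rw [map_pow, hr, hs2])
  have hDne : D ≠ 0 := fun h => by simp [h] at hDdeg
  have hrne : r ≠ 0 := fun h => hDne (by rw [← hrD, h]; ring)
  have := natDegree_pow r 2
  rw [hrD, hDdeg] at this
  omega


open MvPolynomial

noncomputable def myEstmt12 (K : Type) [Field K] :
    MvPolynomial (Fin 2) K ≃ₐ[K] Polynomial (Polynomial K) :=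
  (finSuccEquiv K 1).trans (Polynomial.mapAlgEquiv
    ((finSuccEquiv K 0).trans (Polynomial.mapAlgEquiv (isEmptyAlgEquiv K (Fin 0)))))

theorem statement_12 (K : Type) [Field K] [IsAlgClosed K]
    (p : ℕ) [CharP K p] (hp : p.Prime) (hp3 : 3 < p)
    (b t : K) (ht : t ≠ 0) :
    Irreducible (-(C b * C t ^ 2 * X 0 * X 1) - C t ^ 4 * X 0 ^ 2 * X 1 ^ 2
      + 3 * C t ^ 2 * X 0 * X 1 - C t * X 0 - C t * X 1 :
        MvPolynomial (Fin 2) K) := by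
  have hpd : ¬ (p ∣ 4) := by
    intro h
    have h1 : p ≤ 4 := Nat.le_of_dvd (by norm_num) h
    have h2 : p = 4 := le_antisymm h1 hp3
    rw [h2] at hp
    norm_num at hp
  have h4 : (4:K) ≠ 0 := fun h => hpd ((CharP.cast_eq_zero_iff K p 4).mp (by exact_mod_cast h))
  set e := myEstmt12 K with he
  rw [← MulEquiv.irreducible_iff e]
  have hC : ∀ a : K, e (C a) = Polynomial.C (Polynomial.C a) := fun a => by
    simp [he, myEstmt12, finSuccEquiv_apply, Polynomial.mapAlgEquiv]
    exact (MvPolynomial.coeff_C _ _).trans (if_pos (Finsupp.ext fun i => i.elim0))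
  have h0 : e (X 0) = Polynomial.X := by
    simp [he, myEstmt12, finSuccEquiv_X_zero, Polynomial.mapAlgEquiv, Polynomial.map_X]
  have h1 : e (X 1) = Polynomial.C Polynomial.X := by
    have h : (1 : Fin 2) = Fin.succ 0 := rfl
    rw [he, myEstmt12, AlgEquiv.trans_apply, h, finSuccEquiv_X_succ]
    simp [Polynomial.mapAlgEquiv, finSuccEquiv_X_zero]
  have key : e (-(C b * C t ^ 2 * X 0 * X 1) - C t ^ 4 * X 0 ^ 2 * X 1 ^ 2
      + 3 * C t ^ 2 * X 0 * X 1 - C t * X 0 - C t * X 1)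
      = (Polynomial.C (-(Polynomial.C (t^4) * Polynomial.X^2)) * Polynomial.X^2
        + Polynomial.C (Polynomial.C ((3-b)*t^2) * Polynomial.X - Polynomial.C t) * Polynomial.X
        + Polynomial.C (-(Polynomial.C t * Polynomial.X)) : Polynomial (Polynomial K)) := by
    simp only [map_sub, map_add, map_mul, map_pow, map_neg, map_ofNat, hC, h0, h1]
    ring
  rw [key]
  exact aux_irred_stmt12 K b t ht h4
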